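/- arXiv:2105.15169 — 11 statements merged into one kernel-verified Lean document; each statement's English description precedes it below -/
import Mathlib

section
/- For a signed Lah-type derivative formula: for any smooth function f and integer n ≥ 1, the n-th derivative of x ↦ f(1/x) equals the sum over k from 1 to n of L(n,k) · x^{-(n+k)} · f^{(k)}(1/x), where L(n,k) = (-1)^n · (n!/k!) · C(n-1, k-1) are the signed Lah numbers. -/
noncomputable def Lr (n k : ℕ) : ℝ :=
  if k = 0 then 0 else (-1)^n * ((n.factorial : ℝ) / (k.factorial : ℝ)) * ((n-1).choose (k-1) : ℝ)

lemma nat_idR (m i : ℕ) (hi : i ≤ m) :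
    ((m+2).factorial : ℝ) * ((m+1).choose (i+1)) =
      ((m:ℝ)+(i:ℝ)+3) * (m+1).factorial * (m.choose (i+1)) + ((i:ℝ)+2) * (m+1).factorial * (m.choose i) := by
  have h1 : (m.choose (i+1) : ℝ) * ((i:ℝ)+1) = (m.choose i) * ((m:ℝ) - i) := by
    have h := congrArg (Nat.cast : ℕ → ℝ) (Nat.choose_succ_right_eq m i)
    push_cast [Nat.cast_sub hi] at h
    linarith [h]
  have h2 : ((m+2).factorial : ℝ) = ((m:ℝ)+2) * (m+1).factorial := by
    rw [show m+2 = (m+1)+1 from rfl, Nat.factorial_succ]; push_cast; ring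
  have h3 : ((m+1).choose (i+1) : ℝ) = (m.choose i) + (m.choose (i+1)) := by
    exact_mod_cast congrArg (Nat.cast : ℕ → ℝ) (Nat.choose_succ_succ m i)
  rw [h2, h3]
  linear_combination (-((m+1).factorial : ℝ)) * h1

lemma lr_rec (n k : ℕ) (hn : 1 ≤ n) (hk : 1 ≤ k) :
    Lr (n+1) k = -((n:ℝ)+(k:ℝ)) * Lr n k - Lr n (k-1) := by
  obtain ⟨m, rfl⟩ : ∃ m, n = m + 1 := ⟨n - 1, by omega⟩
  obtain ⟨j, rfl⟩ : ∃ j, k = j + 1 := ⟨k - 1, by omega⟩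
  rcases Nat.eq_zero_or_pos j with rfl | hj
  · simp only [Lr, if_neg (by omega : ¬ (0+1) = 0), if_pos rfl]
    simp [Nat.factorial_succ, pow_succ]
    ring
  · obtain ⟨i, rfl⟩ : ∃ i, j = i + 1 := ⟨j - 1, by omega⟩
    simp only [Lr, if_neg (by omega : ¬ (i+1+1) = 0), if_neg (by omega : ¬ (i+1+1-1) = 0),
      Nat.add_sub_cancel]
    by_cases hle : i ≤ m
    · have key := nat_idR m i hle
      have hf1 : ((i+1+1).factorial : ℝ) ≠ 0 := Nat.cast_ne_zero.mpr (Nat.factorial_ne_zero _)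
      have hf2 : ((i+1).factorial : ℝ) ≠ 0 := Nat.cast_ne_zero.mpr (Nat.factorial_ne_zero _)
      have hfs : ((i+1+1).factorial : ℝ) = ((i:ℝ)+2) * (i+1).factorial := by
        rw [show i+1+1 = (i+1)+1 from rfl, Nat.factorial_succ]; push_cast; ring
      push_cast
      rw [hfs, show m+1+1 = (m+1)+1 from rfl, pow_succ]
      field_simp
      linear_combination (-1:ℝ) * key
    · rw [Nat.choose_eq_zero_of_lt (by omega), Nat.choose_eq_zero_of_lt (by omega),
        Nat.choose_eq_zero_of_lt (by omega)]
      simp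

lemma comp_inv_hasDeriv (f : ℝ → ℝ) (hf : ContDiff ℝ (⊤ : ℕ∞) f) (k : ℕ) (x : ℝ) (hx : x ≠ 0) :
    HasDerivAt (fun y : ℝ => iteratedDeriv k f y⁻¹)
      (iteratedDeriv (k+1) f x⁻¹ * (-(x^2)⁻¹)) x := by
  have hF : Differentiable ℝ (iteratedDeriv k f) :=
    hf.differentiable_iteratedDeriv k (by exact_mod_cast lt_top_iff_ne_top.mpr (by simp))
  have hd : HasDerivAt (iteratedDeriv k f) (iteratedDeriv (k+1) f x⁻¹) x⁻¹ := by
    have h := (hF x⁻¹).hasDerivAt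
    rwa [show deriv (iteratedDeriv k f) x⁻¹ = iteratedDeriv (k+1) f x⁻¹ from
      (congrFun (iteratedDeriv_succ (n := k)) x⁻¹).symm] at h
  exact hd.comp x (hasDerivAt_inv hx)

lemma term_hasDeriv (f : ℝ → ℝ) (hf : ContDiff ℝ (⊤ : ℕ∞) f) (n k : ℕ) (x : ℝ) (hx : x ≠ 0) :
    HasDerivAt (fun y : ℝ => Lr n k * y ^ (-((n:ℤ)+(k:ℤ))) * iteratedDeriv k f y⁻¹)
      (-((n:ℝ)+(k:ℝ)) * Lr n k * x ^ (-((n:ℤ)+1+(k:ℤ))) * iteratedDeriv k f x⁻¹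
        + (- Lr n k) * x ^ (-((n:ℤ)+1+((k:ℤ)+1))) * iteratedDeriv (k+1) f x⁻¹) x := by
  have h1 : HasDerivAt (fun y : ℝ => y ^ (-((n:ℤ)+(k:ℤ))))
      ((-((n:ℤ)+(k:ℤ)) : ℝ) * x ^ (-((n:ℤ)+(k:ℤ)) - 1)) x := by
    exact_mod_cast hasDerivAt_zpow (-((n:ℤ)+(k:ℤ))) x (Or.inl hx)
  have h2 := comp_inv_hasDeriv f hf k x hx
  have h := ((h1.const_mul (Lr n k)).fun_mul h2)
  refine h.congr_deriv ?_
  symm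
  have e1 : -((n:ℤ)+(k:ℤ)) - 1 = -((n:ℤ)+1+(k:ℤ)) := by ring
  have e2 : (x^2)⁻¹ = x ^ (-2 : ℤ) := by
    rw [zpow_neg]; norm_num
  have e3 : x ^ (-((n:ℤ)+(k:ℤ))) * x ^ (-2:ℤ) = x ^ (-((n:ℤ)+1+((k:ℤ)+1))) := by
    rw [← zpow_add₀ hx]; ring_nf
  rw [e1]
  push_cast
  rw [mul_comm (Lr n k) (x ^ (-((n:ℤ)+(k:ℤ))))]
  calc -((n:ℝ)+(k:ℝ)) * Lr n k * x ^ (-((n:ℤ)+1+(k:ℤ))) * iteratedDeriv k f x⁻¹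
        + (- Lr n k) * x ^ (-((n:ℤ)+1+((k:ℤ)+1))) * iteratedDeriv (k+1) f x⁻¹
      = Lr n k * ((-((n:ℝ)+(k:ℝ))) * x ^ (-((n:ℤ)+1+(k:ℤ)))) * iteratedDeriv k f x⁻¹
        + x ^ (-((n:ℤ)+(k:ℤ))) * x^(-2:ℤ) * Lr n k * (iteratedDeriv (k+1) f x⁻¹ * (-1)) := by
        rw [e3]; ring
    _ = _ := by rw [← e2]; push_cast; ring

lemma key_lemma (f : ℝ → ℝ) (hf : ContDiff ℝ (⊤ : ℕ∞) f) (n : ℕ) (hn : 1 ≤ n) :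
    ∀ x : ℝ, x ≠ 0 → iteratedDeriv n (fun y => f y⁻¹) x =
      ∑ k ∈ Finset.Icc 1 n, Lr n k * x ^ (-((n:ℤ)+(k:ℤ))) * iteratedDeriv k f x⁻¹ := by
  induction n, hn using Nat.le_induction with
  | base =>
    intro x hx
    have h := comp_inv_hasDeriv f hf 0 x hx
    simp only [iteratedDeriv_zero] at h
    rw [iteratedDeriv_one]
    rw [h.deriv]
    simp only [Finset.Icc_self, Finset.sum_singleton, Lr]
    norm_num
    exact mul_comm _ _
  | succ n hn ih =>
    intro x hx
    -- replace iteratedDeriv n by the sum in a neighborhood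
    have hev : iteratedDeriv n (fun y => f y⁻¹) =ᶠ[nhds x]
        (fun y => ∑ k ∈ Finset.Icc 1 n, Lr n k * y ^ (-((n:ℤ)+(k:ℤ))) * iteratedDeriv k f y⁻¹) := by
      filter_upwards [isOpen_ne.mem_nhds hx] with y hy
      exact ih y hy
    rw [iteratedDeriv_succ, hev.deriv_eq]
    have hsum : HasDerivAt
        (fun y => ∑ k ∈ Finset.Icc 1 n, Lr n k * y ^ (-((n:ℤ)+(k:ℤ))) * iteratedDeriv k f y⁻¹)
        (∑ k ∈ Finset.Icc 1 n,
          (-((n:ℝ)+(k:ℝ)) * Lr n k * x ^ (-((n:ℤ)+1+(k:ℤ))) * iteratedDeriv k f x⁻¹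
            + (- Lr n k) * x ^ (-((n:ℤ)+1+((k:ℤ)+1))) * iteratedDeriv (k+1) f x⁻¹)) x :=
      HasDerivAt.fun_sum (fun k _ => term_hasDeriv f hf n k x hx)
    rw [hsum.deriv, Finset.sum_add_distrib]
    -- part A : extend to Icc 1 (n+1)
    have hA : ∑ k ∈ Finset.Icc 1 n,
        -((n:ℝ)+(k:ℝ)) * Lr n k * x ^ (-((n:ℤ)+1+(k:ℤ))) * iteratedDeriv k f x⁻¹
        = ∑ k ∈ Finset.Icc 1 (n+1),
        -((n:ℝ)+(k:ℝ)) * Lr n k * x ^ (-((n:ℤ)+1+(k:ℤ))) * iteratedDeriv k f x⁻¹ := by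
      apply Finset.sum_subset (Finset.Icc_subset_Icc le_rfl (by omega))
      intro k hk hk'
      have hkeq : k = n + 1 := by
        simp only [Finset.mem_Icc] at hk hk'; omega
      subst hkeq
      have : Lr n (n+1) = 0 := by
        simp [Lr, Nat.choose_eq_zero_of_lt (by omega : n - 1 < n)]
      rw [this]; ring
    -- part B : reindex
    have hB : ∑ k ∈ Finset.Icc 1 n,
        (- Lr n k) * x ^ (-((n:ℤ)+1+((k:ℤ)+1))) * iteratedDeriv (k+1) f x⁻¹
        = ∑ k ∈ Finset.Icc 1 (n+1),
        (- Lr n (k-1)) * x ^ (-((n:ℤ)+1+(k:ℤ))) * iteratedDeriv k f x⁻¹ := by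
      have h1 : ∑ k ∈ Finset.Icc 1 n,
          (- Lr n k) * x ^ (-((n:ℤ)+1+((k:ℤ)+1))) * iteratedDeriv (k+1) f x⁻¹
          = ∑ k ∈ Finset.Icc 2 (n+1),
          (- Lr n (k-1)) * x ^ (-((n:ℤ)+1+(k:ℤ))) * iteratedDeriv k f x⁻¹ := by
        rw [← Finset.map_add_right_Icc 1 n 1, Finset.sum_map]
        apply Finset.sum_congr rfl
        intro k hk
        simp only [addRightEmbedding_apply, Nat.add_sub_cancel]
        push_cast
        ring_nf
      rw [h1]
      apply Finset.sum_subset (Finset.Icc_subset_Icc (by omega) le_rfl)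
      intro k hk hk'
      have : k = 1 := by simp only [Finset.mem_Icc] at hk hk'; omega
      subst this
      simp [Lr]
    rw [hA, hB, ← Finset.sum_add_distrib]
    apply Finset.sum_congr rfl
    intro k hk
    simp only [Finset.mem_Icc] at hk
    rw [lr_rec n k hn hk.1]
    push_cast
    ring

/-- Signed Lah-type formula for derivatives of `x ↦ f (1/x)`. -/
theorem lah_deriv (f : ℝ → ℝ) (hf : ContDiff ℝ (⊤ : ℕ∞) f) (n : ℕ) (hn : 1 ≤ n)
    (x : ℝ) (hx : x ≠ 0) :
    iteratedDeriv n (fun y => f y⁻¹) x =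
      ∑ k ∈ Finset.Icc 1 n,
        ((-1 : ℝ) ^ n * ((n.factorial : ℝ) / (k.factorial : ℝ)) *
          ((n - 1).choose (k - 1) : ℝ)) * x ^ (-((n : ℤ) + (k : ℤ))) *
          iteratedDeriv k f x⁻¹ := by
  rw [key_lemma f hf n hn x hx]
  apply Finset.sum_congr rfl
  intro k hk
  simp only [Finset.mem_Icc] at hk
  rw [Lr, if_neg (by omega : ¬ k = 0)]
end

section
/- For an Appell sequence (A_n), define the generalized reciprocal Appell polynomial Â_{n,k}(x) = x^k · A_n(1/x) for x ≠ 0. Then for all n, k ≥ ℓ ≥ 0, the ℓ-th derivative satisfies d^ℓ/dx^ℓ Â_{n,k}(x) = ℓ! · Σ_{ν=0}^ℓ (-1)^ν · C(k-ν, k-ℓ) · C(n,ν) · Â_{n-ν, k-ℓ-ν}(x). -/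
/-!
Away from `0`, `x ^ k * A n x⁻¹ = ∑ j, C(n,j) α (n-j) x ^ (k-j)` is a Laurent polynomial, so its
`ℓ`-th derivative has coefficients `C(n,j) (k-j)(k-j-1)⋯(k-j-ℓ+1) = C(n,j) ℓ! binom(k-j, ℓ)`,
where `binom` is the generalized binomial coefficient `Ring.choose`, as `k - j` may be negative.
Expanding the right-hand side in the same monomials via `C(n,ν) C(n-ν,j-ν) = C(n,j) C(j,ν)`, the
claim reduces, for each `j`, to `binom(k-j, ℓ) = ∑ ν, (-1)^ν C(j,ν) C(k-ν, k-ℓ)`, which follows from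
Pascal's rule by induction on `j`.
-/

open Finset

theorem Ring.choose_natCast_sub_natCast (k j ℓ : ℕ) (h : ℓ ≤ k) :
    Ring.choose ((k : ℤ) - j) ℓ =
      ∑ ν ∈ range (ℓ + 1), (-1) ^ ν * (j.choose ν * (k - ν).choose (k - ℓ) : ℤ) := by
  induction j generalizing k ℓ with
  | zero =>
    rw [Nat.cast_zero, sub_zero, Ring.choose_natCast, sum_range_succ',
      sum_eq_zero fun ν _ => by simp]
    simp [Nat.choose_symm h]
  | succ j ih =>
    cases ℓ with
    | zero => simp
    | succ ℓ =>
      obtain ⟨k, rfl⟩ : ∃ k', k = k' + 1 := ⟨k - 1, by omega⟩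
      have pascal : Ring.choose ((↑(k + 1) : ℤ) - ↑(j + 1)) (ℓ + 1) =
          Ring.choose ((↑(k + 1) : ℤ) - j) (ℓ + 1) - Ring.choose ((k : ℤ) - j) ℓ := by
        have e₁ : ((k + 1 : ℕ) : ℤ) - ↑(j + 1) = k - j := by push_cast; ring
        have e₂ : ((k + 1 : ℕ) : ℤ) - j = (k - j) + 1 := by push_cast; ring
        rw [e₁, e₂, Ring.choose_succ_succ]
        ring
      rw [pascal, ih (k + 1) (ℓ + 1) h, ih k ℓ (by omega), sum_range_succ' _ (ℓ + 1),
        sum_range_succ' _ (ℓ + 1)]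
      simp only [Nat.choose_succ_succ', Nat.add_sub_add_right, Nat.choose_zero_right, pow_succ,
        Nat.cast_add, add_mul, mul_add, sum_add_distrib, mul_neg_one, neg_mul, sum_neg_distrib]
      ring

theorem prod_range_intCast_sub_eq_factorial_mul_choose {R : Type*} [CommRing R] (m : ℤ) (ℓ : ℕ) :
    ∏ t ∈ range ℓ, ((m : R) - t) = ℓ.factorial * ((Ring.choose m ℓ : ℤ) : R) := by
  have h := Ring.descPochhammer_eq_factorial_smul_choose m ℓ
  rw [← Polynomial.eval_eq_smeval, descPochhammer_eval_eq_prod_range, nsmul_eq_mul] at h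
  exact_mod_cast congrArg (Int.cast : ℤ → R) h

theorem choose_mul_sum_range_choose {R : Type*} [CommSemiring R] (f : ℕ → R) {n ν : ℕ}
    (h : ν ≤ n) :
    (n.choose ν : R) * ∑ μ ∈ range (n - ν + 1), ((n - ν).choose μ : R) * f (ν + μ) =
      ∑ j ∈ range (n + 1), (n.choose j : R) * j.choose ν * f j := by
  symm
  rw [← sum_range_add_sum_Ico _ (h.trans n.le_succ), sum_Ico_eq_sum_range,
    sum_eq_zero fun j hj => by simp [Nat.choose_eq_zero_of_lt (mem_range.mp hj)], zero_add,
    Nat.succ_sub h, mul_sum]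
  refine sum_congr rfl fun μ _ => ?_
  have h := Nat.choose_mul (n := n) (Nat.le_add_right ν μ)
  rw [Nat.add_sub_cancel_left] at h
  rw [← mul_assoc, ← Nat.cast_mul, ← Nat.cast_mul, h]

theorem contDiffAt_zpow_of_ne_zero {𝕜 : Type*} [NontriviallyNormedField 𝕜] {x : 𝕜} (hx : x ≠ 0)
    (m : ℤ) (n : WithTop ℕ∞) : ContDiffAt 𝕜 n (fun y => y ^ m) x := by
  obtain ⟨m, rfl | rfl⟩ := Int.eq_nat_or_neg m
  · simp only [zpow_natCast]
    exact contDiffAt_fun_id.pow m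
  · simp only [zpow_neg, zpow_natCast]
    exact (contDiffAt_fun_id.pow m).inv (pow_ne_zero m hx)

theorem iteratedDeriv_sum_mul_zpow {𝕜 ι : Type*} [NontriviallyNormedField 𝕜] (s : Finset ι)
    (c : ι → 𝕜) (e : ι → ℤ) (ℓ : ℕ) {x : 𝕜} (hx : x ≠ 0) :
    iteratedDeriv ℓ (fun y => ∑ i ∈ s, c i * y ^ e i) x =
      ∑ i ∈ s, c i * ((∏ t ∈ range ℓ, ((e i : 𝕜) - t)) * x ^ (e i - ℓ)) := by
  rw [iteratedDeriv_fun_sum fun i _ => contDiffAt_const.mul (contDiffAt_zpow_of_ne_zero hx _ _)]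
  refine sum_congr rfl fun i _ => ?_
  rw [iteratedDeriv_const_mul _ (contDiffAt_zpow_of_ne_zero hx _ _), iteratedDeriv_eq_iterate,
    iter_deriv_zpow]

theorem zpow_mul_sum_inv_pow {K : Type*} [Field K] {x : K} (hx : x ≠ 0) (m : ℤ) (s : Finset ℕ)
    (c : ℕ → K) : x ^ m * ∑ j ∈ s, c j * x⁻¹ ^ j = ∑ j ∈ s, c j * x ^ (m - j) := by
  rw [mul_sum]
  refine sum_congr rfl fun j _ => ?_
  rw [zpow_sub₀ hx, zpow_natCast, inv_pow, div_eq_mul_inv]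
  ring

theorem zpow_mul_eval_inv_eq_sum {K : Type*} [Field K] {α : ℕ → K} {A : ℕ → K → K}
    (hA : ∀ n x, A n x = ∑ ν ∈ range (n + 1), (n.choose ν : K) * α (n - ν) * x ^ ν)
    (n : ℕ) (m : ℤ) {x : K} (hx : x ≠ 0) :
    x ^ m * A n x⁻¹ = ∑ j ∈ range (n + 1), (n.choose j * α (n - j)) * x ^ (m - j) := by
  rw [hA, zpow_mul_sum_inv_pow hx]

theorem choose_mul_zpow_mul_eval_inv {K : Type*} [Field K] {α : ℕ → K} {A : ℕ → K → K}
    (hA : ∀ n x, A n x = ∑ ν ∈ range (n + 1), (n.choose ν : K) * α (n - ν) * x ^ ν)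
    {n ν : ℕ} (hν : ν ≤ n) (m : ℤ) {x : K} (hx : x ≠ 0) :
    (n.choose ν : K) * (x ^ (m - ν) * A (n - ν) x⁻¹) =
      ∑ j ∈ range (n + 1), (n.choose j : K) * j.choose ν * (α (n - j) * x ^ (m - j)) := by
  rw [zpow_mul_eval_inv_eq_sum hA _ _ hx, ← choose_mul_sum_range_choose _ hν]
  simp only [Nat.sub_sub, Nat.cast_add, ← sub_sub, mul_assoc]

/-- Derivatives of generalized reciprocal Appell polynomials
`Â_{n,k}(x) = x^k * A_n(1/x)`. -/
theorem generalized_reciprocal_appell_deriv (α : ℕ → ℂ) (A : ℕ → ℂ → ℂ)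
    (hA : ∀ n x, A n x =
      ∑ ν ∈ Finset.range (n + 1), (n.choose ν : ℂ) * α (n - ν) * x ^ ν)
    (n k ℓ : ℕ) (hn : ℓ ≤ n) (hk : ℓ ≤ k) (x : ℂ) (hx : x ≠ 0) :
    iteratedDeriv ℓ (fun y => y ^ (k : ℤ) * A n y⁻¹) x =
      (ℓ.factorial : ℂ) * ∑ ν ∈ Finset.range (ℓ + 1),
        (-1) ^ ν * ((k - ν).choose (k - ℓ) : ℂ) * (n.choose ν : ℂ) *
          (x ^ ((k : ℤ) - (ℓ : ℤ) - (ν : ℤ)) * A (n - ν) x⁻¹) := by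
  calc iteratedDeriv ℓ (fun y => y ^ (k : ℤ) * A n y⁻¹) x
      = iteratedDeriv ℓ
          (fun y => ∑ j ∈ range (n + 1), (n.choose j * α (n - j)) * y ^ ((k : ℤ) - j)) x :=
        Filter.EventuallyEq.iteratedDeriv_eq ℓ <|
          (eventually_ne_nhds hx).mono fun y hy => zpow_mul_eval_inv_eq_sum hA n k hy
    _ = ∑ j ∈ range (n + 1), (n.choose j * α (n - j)) *
          ((∏ t ∈ range ℓ, (((k - j : ℤ) : ℂ) - t)) * x ^ ((k : ℤ) - j - ℓ)) :=
        iteratedDeriv_sum_mul_zpow _ _ _ ℓ hx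
    _ = ∑ j ∈ range (n + 1), ∑ ν ∈ range (ℓ + 1),
          ℓ.factorial * ((-1) ^ ν * ((k - ν).choose (k - ℓ) : ℂ)) *
            ((n.choose j : ℂ) * j.choose ν * (α (n - j) * x ^ ((k : ℤ) - ℓ - j))) := by
      refine sum_congr rfl fun j _ => ?_
      rw [prod_range_intCast_sub_eq_factorial_mul_choose, Ring.choose_natCast_sub_natCast k j ℓ hk,
        sub_right_comm]
      push_cast
      simp only [mul_sum, sum_mul]
      refine sum_congr rfl fun ν _ => ?_
      ring
    _ = _ := by
      rw [sum_comm, mul_sum]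
      refine sum_congr rfl fun ν hν => ?_
      rw [mul_assoc _ _ (n.choose ν : ℂ), mul_assoc, mul_assoc,
        choose_mul_zpow_mul_eval_inv hA ((mem_range_succ_iff.mp hν).trans hn) _ hx]
      simp only [mul_sum]
      refine sum_congr rfl fun j _ => ?_
      ring
end

section
/- If an Appell sequence (A_n) satisfies the reflection relation A_n(1-x) = (-1)^n A_n(x), then for all r, s ≥ 0 and all x one has the reciprocity relation (-1)^r · A_{r,s}(x) = (-1)^s · A_{s,r}(-x), where A_{r,s}(x) = Σ_{ν=0}^r C(r,ν)·A_{s+ν}(x). -/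
/-!
By `hA` the exponential generating function of `A_n(x)` is `a(t) e^{xt}`, where `a` is that
of `α`; from `e^{(x+y)t} = e^{xt} e^{yt}` one gets the translation formula
`A_n(x + 1) = ∑ C(n,k) A_k(x)`, which together with the reflection relation gives
`A_n(x) = (-1)^n ∑ C(n,k) A_k(-x)`: the case `r = 0` of the reciprocity. The general case follows
by induction on `r` from Pascal's rule `A_{r+1,s} = A_{r,s} + A_{r,s+1}`.
-/

open Finset PowerSeries Nat

section BinomialConvolution

variable {R : Type*} [CommSemiring R]

def binomConv (f g : ℕ → R) (n : ℕ) : R :=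
  ∑ p ∈ antidiagonal n, n.choose p.1 * f p.1 * g p.2

theorem binomConv_eq_sum_range (f g : ℕ → R) (n : ℕ) :
    binomConv f g n = ∑ k ∈ range (n + 1), n.choose k * f k * g (n - k) :=
  Nat.sum_antidiagonal_eq_sum_range_succ (fun i j => n.choose i * f i * g j) n

theorem binomConv_pow_eq_add_pow (x y : R) :
    binomConv (x ^ ·) (y ^ ·) = ((x + y) ^ ·) := by
  ext n
  simp only [binomConv, (Commute.all x y).add_pow', nsmul_eq_mul, mul_assoc]

end BinomialConvolution

section ExponentialGeneratingFunction

variable {K : Type*} [Field K]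

noncomputable def egf (f : ℕ → K) : K⟦X⟧ :=
  PowerSeries.mk fun n => f n / n !

theorem coeff_egf (f : ℕ → K) (n : ℕ) : coeff n (egf f) = f n / n ! :=
  coeff_mk _ _

variable [CharZero K]

theorem egf_injective : Function.Injective (egf : (ℕ → K) → K⟦X⟧) := by
  intro f g hfg
  ext n
  have := congrArg (coeff n) hfg
  rwa [coeff_egf, coeff_egf, div_left_inj' (Nat.cast_ne_zero.mpr (factorial_ne_zero n))] at this

theorem egf_binomConv (f g : ℕ → K) : egf (binomConv f g) = egf f * egf g := by
  ext n
  rw [coeff_egf, coeff_mul, binomConv, sum_div]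
  refine sum_congr rfl fun p hp => ?_
  obtain ⟨i, j⟩ := p
  obtain rfl : i + j = n := mem_antidiagonal.mp hp
  have hchoose : ((i + j).choose j : K) ≠ 0 := Nat.cast_ne_zero.mpr (Nat.choose_pos (by omega)).ne'
  rw [coeff_egf, coeff_egf, ← Nat.add_choose_mul_factorial_mul_factorial, Nat.choose_symm_add]
  push_cast
  field_simp

theorem binomConv_right_comm (f g h : ℕ → K) :
    binomConv (binomConv f g) h = binomConv (binomConv f h) g :=
  egf_injective <| by simp only [egf_binomConv]; ring

end ExponentialGeneratingFunction

section Appell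

variable {K : Type*} [Field K] [CharZero K] {α : ℕ → K} {A : ℕ → K → K}

theorem appell_add
    (hA : ∀ n x, A n x = ∑ ν ∈ range (n + 1), (n.choose ν : K) * α (n - ν) * x ^ ν)
    (n : ℕ) (x y : K) :
    A n (x + y) = binomConv (A · x) (y ^ ·) n := by
  have hconv : ∀ x, (A · x) = binomConv (x ^ ·) α := fun x => funext fun n => by
    rw [hA, binomConv_eq_sum_range]
    exact sum_congr rfl fun ν _ => by ring
  calc A n (x + y) = binomConv ((x + y) ^ ·) α n := congrFun (hconv (x + y)) n
    _ = binomConv (A · x) (y ^ ·) n := by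
      rw [← binomConv_pow_eq_add_pow, binomConv_right_comm, ← hconv]

theorem appell_add_one
    (hA : ∀ n x, A n x = ∑ ν ∈ range (n + 1), (n.choose ν : K) * α (n - ν) * x ^ ν)
    (n : ℕ) (x : K) :
    A n (x + 1) = ∑ k ∈ range (n + 1), (n.choose k : K) * A k x := by
  simp only [appell_add hA, binomConv_eq_sum_range, one_pow, mul_one]

theorem appell_eq_neg_one_pow_mul_sum_neg
    (hA : ∀ n x, A n x = ∑ ν ∈ range (n + 1), (n.choose ν : K) * α (n - ν) * x ^ ν)
    (href : ∀ n x, A n (1 - x) = (-1) ^ n * A n x) (n : ℕ) (x : K) :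
    A n x = (-1) ^ n * ∑ k ∈ range (n + 1), (n.choose k : K) * A k (-x) := by
  rw [← appell_add_one hA, neg_add_eq_sub, href, ← mul_assoc, ← mul_pow]
  norm_num

end Appell

section BinomialShiftSum

variable {R : Type*} [CommRing R]

/-- `binomShiftSum (A · x) r s` is `A_{r,s}(x)`. -/
def binomShiftSum (a : ℕ → R) (r s : ℕ) : R :=
  ∑ ν ∈ range (r + 1), (r.choose ν : R) * a (s + ν)

theorem binomShiftSum_succ_left (a : ℕ → R) (r s : ℕ) :
    binomShiftSum a (r + 1) s = binomShiftSum a r s + binomShiftSum a r (s + 1) := by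
  have hshift : binomShiftSum a r s =
      ∑ ν ∈ range (r + 1), (r.choose (ν + 1) : R) * a (s + (ν + 1)) + a s := by
    rw [binomShiftSum, sum_range_succ', sum_range_succ, choose_succ_self]
    simp
  rw [hshift, binomShiftSum, binomShiftSum, sum_range_succ']
  simp only [choose_succ_succ, cast_add, add_mul, sum_add_distrib, choose_zero_right, cast_one,
    one_mul, add_zero, add_right_comm s 1, add_assoc s]
  ring

theorem neg_one_pow_mul_binomShiftSum_comm {a b : ℕ → R}
    (hab : ∀ n, a n = (-1) ^ n * ∑ k ∈ range (n + 1), (n.choose k : R) * b k) (r s : ℕ) :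
    (-1) ^ r * binomShiftSum a r s = (-1) ^ s * binomShiftSum b s r := by
  induction r generalizing s with
  | zero => simpa [binomShiftSum] using hab s
  | succ r ih =>
    linear_combination (-1) ^ (r + 1) * binomShiftSum_succ_left a r s - ih s - ih (s + 1)
      + (-1) ^ s * binomShiftSum_succ_left b s r

end BinomialShiftSum

/-- Reciprocity relation `(-1)^r A_{r,s}(x) = (-1)^s A_{s,r}(-x)` under the
reflection relation. -/
theorem appell_rank_shift_reciprocity (α : ℕ → ℂ) (A : ℕ → ℂ → ℂ)
    (hA : ∀ n x, A n x =
      ∑ ν ∈ Finset.range (n + 1), (n.choose ν : ℂ) * α (n - ν) * x ^ ν)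
    (href : ∀ n x, A n (1 - x) = (-1) ^ n * A n x)
    (r s : ℕ) (x : ℂ) :
    (-1) ^ r * ∑ ν ∈ Finset.range (r + 1), (r.choose ν : ℂ) * A (s + ν) x
      = (-1) ^ s * ∑ ν ∈ Finset.range (s + 1), (s.choose ν : ℂ) * A (r + ν) (-x) :=
  neg_one_pow_mul_binomShiftSum_comm (appell_eq_neg_one_pow_mul_sum_neg hA href · x) r s
end

section
/- For the Bernoulli numbers, the reciprocity relation (-1)^r · Σ_{ν=0}^r C(r,ν)·B_{s+ν} = (-1)^s · Σ_{ν=0}^s C(s,ν)·B_{r+ν} holds for all r, s ≥ 0. -/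
open Finset

private def bernA (r s : ℕ) : ℚ :=
  ∑ ν ∈ Finset.range (r + 1), (r.choose ν : ℚ) * bernoulli (s + ν)

private lemma bernA_rec (r s : ℕ) : bernA (r + 1) s = bernA r s + bernA r (s + 1) := by
  unfold bernA
  rw [Finset.sum_range_succ' (fun ν => ((r+1).choose ν : ℚ) * bernoulli (s + ν)),
      Finset.sum_range_succ' (fun ν => (r.choose ν : ℚ) * bernoulli (s + ν))]
  have h : ∀ ν ∈ Finset.range (r + 1),
      ((r+1).choose (ν+1) : ℚ) * bernoulli (s + (ν+1))
        = (r.choose (ν+1) : ℚ) * bernoulli (s + (ν+1))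
          + (r.choose ν : ℚ) * bernoulli ((s+1) + ν) := by
    intro ν _
    rw [Nat.choose_succ_succ]
    push_cast
    have : s + (ν + 1) = (s + 1) + ν := by omega
    rw [this]
    ring
  rw [Finset.sum_congr rfl h, Finset.sum_add_distrib]
  have h2 : (∑ x ∈ Finset.range (r + 1), (r.choose (x+1) : ℚ) * bernoulli (s + (x+1)))
      = ∑ x ∈ Finset.range r, (r.choose (x+1) : ℚ) * bernoulli (s + (x+1)) := by
    rw [Finset.sum_range_succ, Nat.choose_succ_self]
    simp
  rw [h2]
  simp only [Nat.choose_zero_right, Nat.cast_one, one_mul]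
  ring

private lemma bernoulli_odd_eq_zero {n : ℕ} (h1 : n ≠ 1) (ho : Odd n) : bernoulli n = 0 := by
  have h0 : n ≠ 0 := by rintro rfl; exact (Nat.not_odd_iff_even.2 Even.zero) ho
  have hlt : 1 < n := by omega
  rw [bernoulli_eq_bernoulli'_of_ne_one h1, bernoulli'_eq_zero_of_odd ho hlt]

private lemma bernA_base (s : ℕ) :
    (∑ ν ∈ Finset.range (s + 1), (s.choose ν : ℚ) * bernoulli ν)
      = (-1 : ℚ) ^ s * bernoulli s := by
  rw [Finset.sum_range_succ, sum_bernoulli]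
  rcases eq_or_ne s 1 with rfl | hs
  · norm_num [bernoulli_one]
  · simp only [hs, if_false, Nat.choose_self, Nat.cast_one, one_mul, zero_add]
    rcases Nat.even_or_odd s with he | ho
    · rw [he.neg_one_pow, one_mul]
    · rw [bernoulli_odd_eq_zero hs ho]
      ring

private lemma bernA_symm (r s : ℕ) :
    (-1 : ℚ) ^ r * bernA r s = (-1 : ℚ) ^ s * bernA s r := by
  induction r generalizing s with
  | zero =>
    have h0 : bernA 0 s = bernoulli s := by simp [bernA]
    have h1 : bernA s 0 = ∑ ν ∈ Finset.range (s + 1), (s.choose ν : ℚ) * bernoulli ν := by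
      simp [bernA]
    rw [h0, h1, bernA_base, pow_zero, one_mul, ← mul_assoc, ← mul_pow]
    norm_num
  | succ r ih =>
    rw [bernA_rec]
    calc (-1:ℚ)^(r+1) * (bernA r s + bernA r (s+1))
        = -((-1:ℚ)^r * bernA r s) - ((-1:ℚ)^r * bernA r (s+1)) := by rw [pow_succ]; ring
      _ = -((-1:ℚ)^s * bernA s r) - ((-1:ℚ)^(s+1) * bernA (s+1) r) := by rw [ih s, ih (s+1)]
      _ = (-1:ℚ)^s * (bernA (s+1) r - bernA s r) := by rw [pow_succ]; ring
      _ = (-1:ℚ)^s * bernA s (r+1) := by rw [bernA_rec]; ring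

/-- Reciprocity relation for Bernoulli numbers. -/
theorem bernoulli_reciprocity (r s : ℕ) :
    (-1 : ℚ) ^ r * ∑ ν ∈ Finset.range (r + 1), (r.choose ν : ℚ) * bernoulli (s + ν)
      = (-1 : ℚ) ^ s * ∑ ν ∈ Finset.range (s + 1), (s.choose ν : ℚ) * bernoulli (r + ν) := by
  exact bernA_symm r s
end

section
/- For any Appell sequence (A_n) and r, s ≥ 0, the bivariate reciprocity A_{r,s}(x,y) = A_{s,r}(x+y, -y) holds, where A_{r,s}(x,y) is defined umbrally as (A(x)+y)^r·A(x)^s = Σ_{j=0}^r C(r,j)·y^{r-j}·A_{s+j}(x). -/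
/-- Pascal-recursion for binomial-weighted sums. -/
lemma appell_sum_rec (c : ℂ) (f : ℕ → ℂ) (n : ℕ) :
    ∑ j ∈ Finset.range (n + 2), ((n + 1).choose j : ℂ) * c ^ (n + 1 - j) * f j
      = c * ∑ j ∈ Finset.range (n + 1), (n.choose j : ℂ) * c ^ (n - j) * f j
        + ∑ j ∈ Finset.range (n + 1), (n.choose j : ℂ) * c ^ (n - j) * f (j + 1) := by
  rw [Finset.sum_range_succ' _ (n + 1), Finset.mul_sum,
    Finset.sum_range_succ' (fun j => c * ((n.choose j : ℂ) * c ^ (n - j) * f j)) n]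
  have h1 : ∀ j, j ∈ Finset.range (n + 1) →
      ((n + 1).choose (j + 1) : ℂ) * c ^ (n + 1 - (j + 1)) * f (j + 1)
        = (n.choose j : ℂ) * c ^ (n - j) * f (j + 1)
          + (n.choose (j + 1) : ℂ) * c ^ (n - j) * f (j + 1) := by
    intro j _
    rw [Nat.choose_succ_succ]
    push_cast
    simp only [Nat.succ_eq_one_add]
    ring
  rw [Finset.sum_congr rfl h1, Finset.sum_add_distrib]
  have h2 : ∀ j, j ∈ Finset.range n →
      c * ((n.choose (j + 1) : ℂ) * c ^ (n - (j + 1)) * f (j + 1))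
        = (n.choose (j + 1) : ℂ) * c ^ (n - j) * f (j + 1) := by
    intro j hj
    rw [Finset.mem_range] at hj
    have : n - j = (n - (j + 1)) + 1 := by omega
    rw [this, pow_succ]
    ring
  rw [Finset.sum_congr rfl h2]
  have h3 : ∑ j ∈ Finset.range (n + 1), (n.choose (j + 1) : ℂ) * c ^ (n - j) * f (j + 1)
      = ∑ j ∈ Finset.range n, (n.choose (j + 1) : ℂ) * c ^ (n - j) * f (j + 1) := by
    rw [Finset.sum_range_succ, Nat.choose_succ_self]
    simp
  rw [h3]
  simp only [Nat.succ_eq_one_add, Nat.choose_zero_right, Nat.cast_one, one_mul, Nat.sub_zero]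
  ring

/-- Base case: `A_s(x) = Σ C(s,j) (-y)^{s-j} A_j(x+y)`. -/
lemma appell_base (A : ℕ → ℂ → ℂ)
    (htrans : ∀ n x y, A n (x + y) =
      ∑ ν ∈ Finset.range (n + 1), (n.choose ν : ℂ) * A (n - ν) x * y ^ ν)
    (s : ℕ) (x y : ℂ) :
    A s x = ∑ j ∈ Finset.range (s + 1), (s.choose j : ℂ) * (-y) ^ (s - j) * A j (x + y) := by
  have h := htrans s (x + y) (-y)
  have hx : x + y + -y = x := by ring
  rw [hx] at h
  rw [h]
  conv_rhs => rw [← Finset.sum_range_reflect]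
  refine Finset.sum_congr rfl fun j hj => ?_
  rw [Finset.mem_range] at hj
  simp only [Nat.add_sub_cancel]
  have h1 : s - (s - j) = j := by omega
  have h2 : s.choose (s - j) = s.choose j := Nat.choose_symm (by omega)
  rw [h1, h2]
  ring

/-- Bivariate reciprocity `A_{r,s}(x,y) = A_{s,r}(x+y,-y)` for Appell sequences. -/
theorem appell_bivariate_reciprocity (A : ℕ → ℂ → ℂ)
    (htrans : ∀ n x y, A n (x + y) =
      ∑ ν ∈ Finset.range (n + 1), (n.choose ν : ℂ) * A (n - ν) x * y ^ ν)
    (r s : ℕ) (x y : ℂ) :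
    ∑ j ∈ Finset.range (r + 1), (r.choose j : ℂ) * y ^ (r - j) * A (s + j) x
      = ∑ j ∈ Finset.range (s + 1), (s.choose j : ℂ) * (-y) ^ (s - j) * A (r + j) (x + y) := by
  induction r generalizing s with
  | zero =>
      simp only [Finset.sum_range_one, Nat.choose_self, Nat.cast_one, pow_zero, one_mul,
        Nat.add_zero, Nat.zero_add]
      simpa using appell_base A htrans s x y
  | succ r ih =>
      have hL := appell_sum_rec y (fun j => A (s + j) x) r
      have hR := appell_sum_rec (-y) (fun j => A (r + j) (x + y)) s
      -- LHS(r+1, s) = y * LHS(r, s) + LHS(r, s+1)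
      have hL' : ∑ j ∈ Finset.range (r + 1 + 1), ((r + 1).choose j : ℂ) * y ^ (r + 1 - j) * A (s + j) x
          = y * ∑ j ∈ Finset.range (r + 1), (r.choose j : ℂ) * y ^ (r - j) * A (s + j) x
            + ∑ j ∈ Finset.range (r + 1), (r.choose j : ℂ) * y ^ (r - j) * A (s + 1 + j) x := by
        rw [hL]
        congr 1
        refine Finset.sum_congr rfl fun j _ => ?_
        have : s + (j + 1) = s + 1 + j := by omega
        rw [this]
      -- RHS(r, s+1) = -y * RHS(r, s) + RHS(r+1, s)
      have hR' : ∑ j ∈ Finset.range (s + 1 + 1), ((s + 1).choose j : ℂ) * (-y) ^ (s + 1 - j) * A (r + j) (x + y)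
          = -y * ∑ j ∈ Finset.range (s + 1), (s.choose j : ℂ) * (-y) ^ (s - j) * A (r + j) (x + y)
            + ∑ j ∈ Finset.range (s + 1), (s.choose j : ℂ) * (-y) ^ (s - j) * A (r + 1 + j) (x + y) := by
        rw [hR]
        congr 1
        refine Finset.sum_congr rfl fun j _ => ?_
        have : r + (j + 1) = r + 1 + j := by omega
        rw [this]
      rw [hL', ih s, ih (s + 1)]
      rw [hR'] -- expands ih (s+1)'s RHS? careful
      ring
end

section
/- If an Appell sequence (A_n) satisfies the reflection relation A_n(1-x) = (-1)^n A_n(x), then for all r, s ≥ 0: (-1)^r · A_{r,s}(x,y) = (-1)^s · A_{s,r}(1-x-y, y), where A_{r,s}(x,y) = Σ_{j=0}^r C(r,j)·y^{r-j}·A_{s+j}(x). -/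
noncomputable def appF (A : ℕ → ℂ → ℂ) (r s : ℕ) (x y : ℂ) : ℂ :=
  ∑ j ∈ Finset.range (r + 1), (r.choose j : ℂ) * y ^ (r - j) * A (s + j) x

lemma appF_rec (A : ℕ → ℂ → ℂ) (r s : ℕ) (x y : ℂ) :
    appF A (r + 1) s x y = y * appF A r s x y + appF A r (s + 1) x y := by
  have e1 : y * appF A r s x y
      = ∑ j ∈ Finset.range (r + 2), (r.choose j : ℂ) * y ^ (r + 1 - j) * A (s + j) x := by
    rw [Finset.sum_range_succ, Nat.choose_succ_self]
    push_cast
    rw [zero_mul, zero_mul, add_zero]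
    unfold appF
    rw [Finset.mul_sum]
    apply Finset.sum_congr rfl
    intro j hj
    have hj' : j ≤ r := by have := Finset.mem_range.mp hj; omega
    have h3 : r + 1 - j = (r - j) + 1 := by omega
    rw [h3, pow_succ]
    ring
  have e2 : appF A r (s + 1) x y
      = ∑ j ∈ Finset.range (r + 2),
          (if j = 0 then 0 else (r.choose (j - 1) : ℂ) * y ^ (r + 1 - j) * A (s + j) x) := by
    rw [Finset.sum_range_succ']
    simp only [Nat.succ_ne_zero, if_false, if_true, add_zero, Nat.add_sub_cancel, eq_self_iff_true]
    unfold appF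
    apply Finset.sum_congr rfl
    intro j hj
    have h2 : r + 1 - (j + 1) = r - j := by omega
    have h4 : s + 1 + j = s + (j + 1) := by omega
    rw [h2, h4]
  rw [e1, e2, ← Finset.sum_add_distrib]
  unfold appF
  apply Finset.sum_congr rfl
  intro j hj
  rcases j with _ | k
  · simp
  · simp only [if_neg (Nat.succ_ne_zero k), Nat.add_sub_cancel]
    have hch : ((r + 1).choose (k + 1) : ℂ) = (r.choose k : ℂ) + (r.choose (k + 1) : ℂ) := by
      rw [Nat.choose_succ_succ]; push_cast; ring
    rw [hch]
    ring

lemma appF_base (A : ℕ → ℂ → ℂ)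
    (htrans : ∀ n x y, A n (x + y) =
      ∑ ν ∈ Finset.range (n + 1), (n.choose ν : ℂ) * A (n - ν) x * y ^ ν)
    (href : ∀ n x, A n (1 - x) = (-1) ^ n * A n x)
    (s : ℕ) (x y : ℂ) :
    A s x = (-1) ^ s * appF A s 0 (1 - x - y) y := by
  have key : A s x = ∑ j ∈ Finset.range (s + 1),
      (s.choose j : ℂ) * A j (x + y) * (-y) ^ (s - j) := by
    have h := htrans s (x + y) (-y)
    have hx : x + y + -y = x := by ring
    rw [hx] at h
    rw [h, ← Finset.sum_range_reflect]
    apply Finset.sum_congr rfl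
    intro j hj
    have hj' : j ≤ s := by have := Finset.mem_range.mp hj; omega
    have h5 : s + 1 - 1 - j = s - j := by omega
    rw [h5, Nat.choose_symm hj', Nat.sub_sub_self hj']
  rw [key]
  unfold appF
  rw [Finset.mul_sum]
  apply Finset.sum_congr rfl
  intro j hj
  have hj' : j ≤ s := by have := Finset.mem_range.mp hj; omega
  have h1 : (1 : ℂ) - x - y = 1 - (x + y) := by ring
  simp only [Nat.zero_add]
  rw [h1, href]
  have hpow : ((-1 : ℂ)) ^ (s - j) = (-1) ^ s * (-1) ^ j := by
    have ha : ((-1 : ℂ)) ^ (s - j) * (-1) ^ j = (-1) ^ s := by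
      rw [← pow_add]; congr 1; omega
    have hb : ((-1 : ℂ)) ^ j * (-1) ^ j = 1 := by
      rw [← mul_pow]; norm_num
    calc ((-1 : ℂ)) ^ (s - j) = (-1) ^ (s - j) * ((-1) ^ j * (-1) ^ j) := by
          rw [hb, mul_one]
      _ = ((-1) ^ (s - j) * (-1) ^ j) * (-1) ^ j := by ring
      _ = (-1) ^ s * (-1) ^ j := by rw [ha]
  rw [neg_pow, hpow]
  ring

lemma appF_main (A : ℕ → ℂ → ℂ)
    (htrans : ∀ n x y, A n (x + y) =
      ∑ ν ∈ Finset.range (n + 1), (n.choose ν : ℂ) * A (n - ν) x * y ^ ν)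
    (href : ∀ n x, A n (1 - x) = (-1) ^ n * A n x)
    (y : ℂ) :
    ∀ r s x, (-1) ^ r * appF A r s x y = (-1) ^ s * appF A s r (1 - x - y) y := by
  intro r
  induction r with
  | zero =>
    intro s x
    have h0 : appF A 0 s x y = A s x := by simp [appF]
    rw [h0, pow_zero, one_mul]
    exact appF_base A htrans href s x y
  | succ r ih =>
    intro s x
    rw [appF_rec]
    have hrec2 : appF A s (r + 1) (1 - x - y) y
        = appF A (s + 1) r (1 - x - y) y - y * appF A s r (1 - x - y) y := by
      rw [appF_rec A s r]; ring
    rw [hrec2]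
    have h1 := ih s x
    have h2 := ih (s + 1) x
    linear_combination (-y) * h1 - h2

/-- Bivariate reciprocity under the reflection relation:
`(-1)^r A_{r,s}(x,y) = (-1)^s A_{s,r}(1-x-y, y)`. -/
theorem appell_bivariate_reflection_reciprocity (A : ℕ → ℂ → ℂ)
    (htrans : ∀ n x y, A n (x + y) =
      ∑ ν ∈ Finset.range (n + 1), (n.choose ν : ℂ) * A (n - ν) x * y ^ ν)
    (href : ∀ n x, A n (1 - x) = (-1) ^ n * A n x)
    (r s : ℕ) (x y : ℂ) :
    (-1) ^ r * ∑ j ∈ Finset.range (r + 1), (r.choose j : ℂ) * y ^ (r - j) * A (s + j) x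
      = (-1) ^ s *
        ∑ j ∈ Finset.range (s + 1), (s.choose j : ℂ) * y ^ (s - j) * A (r + j) (1 - x - y) := by
  exact appF_main A htrans href y r s x
end

section
/- For an Appell sequence (A_n) satisfying the reflection relation, for every odd n ≥ 1 there exists a polynomial F_n of degree at most (n-1)/2 such that A_n(x) = (2x-1)·F_n(x(x-1)), and for every even n ≥ 0 there exists a polynomial F_n of degree at most n/2 such that A_n(x) = F_n(x(x-1)). -/
open Polynomial

private lemma coeff_comp_neg_X (q : Polynomial ℂ) (n : ℕ) :
    (q.comp (-X)).coeff n = (-1)^n * q.coeff n := by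
  induction q using Polynomial.induction_on' with
  | add p r hp hr => simp [add_comp, hp, hr, mul_add]
  | monomial k a =>
      have h1 : ((-X : Polynomial ℂ)) = C (-1) * X := by simp [C_neg]
      rw [monomial_comp, h1, mul_pow, ← C_pow, ← mul_assoc, ← C_mul, coeff_C_mul,
        coeff_X_pow, coeff_monomial]
      rcases eq_or_ne n k with h | h
      · subst h; simp; ring
      · simp [h, Ne.symm h]

private lemma eq_expand_of_odd_coeff_zero (q : Polynomial ℂ)
    (hq : ∀ k, ¬ (2 ∣ k) → q.coeff k = 0) :
    q = (contract 2 q).comp (X^2) := by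
  rw [← expand_eq_comp_X_pow]
  ext n
  rw [coeff_expand (by norm_num), coeff_contract (two_ne_zero)]
  split_ifs with h
  · rw [Nat.div_mul_cancel h]
  · exact hq n h

/-- coefficient parity from symmetry -/
private lemma shifted_parity (p : Polynomial ℂ) (ε : ℂ)
    (hsym : ∀ x : ℂ, p.eval (1 - x) = ε * p.eval x) (m : ℕ) (hm : (-1)^m ≠ ε) :
    (p.comp (X + C (2⁻¹:ℂ))).coeff m = 0 := by
  set q := p.comp (X + C (2⁻¹:ℂ)) with hqdef
  have hq : q.comp (-X) = C ε * q := by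
    apply Polynomial.funext
    intro x
    have h1 : -x + (2⁻¹ : ℂ) = 1 - (x + 2⁻¹) := by ring
    simp only [hqdef, eval_comp, eval_add, eval_neg, eval_X, eval_C, eval_mul]
    rw [h1, hsym]
  have h2 := coeff_comp_neg_X q m
  rw [hq, coeff_C_mul] at h2
  have h3 : ((-1)^m - ε) * q.coeff m = 0 := by linear_combination -h2
  rcases mul_eq_zero.1 h3 with h | h
  · exact absurd (by linear_combination h) hm
  · exact h

private lemma sym_decomp (p : Polynomial ℂ) (n : ℕ) (hd : p.degree ≤ n)
    (hsym : ∀ x : ℂ, p.eval (1 - x) = p.eval x) :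
    ∃ F : Polynomial ℂ, F.degree ≤ (n / 2 : ℕ) ∧ ∀ x, p.eval x = F.eval (x * (x - 1)) := by
  set q := p.comp (X + C (2⁻¹:ℂ)) with hqdef
  have hodd : ∀ k, ¬ (2 ∣ k) → q.coeff k = 0 := by
    intro k hk
    refine shifted_parity p 1 (by simpa using hsym) k ?_
    rw [(Nat.odd_iff.2 (by omega : k % 2 = 1)).neg_one_pow]
    norm_num
  have hq : q = (contract 2 q).comp (X^2) := eq_expand_of_odd_coeff_zero q hodd
  set E := contract 2 q with hE
  set F := E.comp (X + C (4⁻¹:ℂ)) with hF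
  have hpq : ∀ x : ℂ, p.eval x = q.eval (x - 2⁻¹) := by
    intro x; simp [hqdef, eval_comp]
  have heval : ∀ x : ℂ, p.eval x = F.eval (x * (x - 1)) := by
    intro x
    rw [hpq x, hq]
    simp only [eval_comp, eval_pow, eval_X, eval_add, eval_C, hF]
    congr 1
    ring
  refine ⟨F, ?_, heval⟩
  -- degree bound
  have hcomp : p = F.comp (X * (X - 1)) := by
    apply Polynomial.funext
    intro x
    rw [heval x]
    simp [eval_comp]
  rcases eq_or_ne F 0 with h0 | h0
  · simp [h0]
  have hg : (X * (X - 1) : Polynomial ℂ).natDegree = 2 := by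
    compute_degree!
  have hnat : p.natDegree = F.natDegree * 2 := by
    rw [hcomp, natDegree_comp, hg]
  have hpn : p.natDegree ≤ n := natDegree_le_iff_degree_le.2 hd
  have : F.natDegree ≤ n / 2 := Nat.le_div_iff_mul_le (by norm_num) |>.2 (by omega)
  exact (degree_le_natDegree).trans (by exact_mod_cast Nat.cast_le.2 this)

private lemma antisym_decomp (p : Polynomial ℂ) (n : ℕ) (hd : p.degree ≤ n)
    (hsym : ∀ x : ℂ, p.eval (1 - x) = - p.eval x) :
    ∃ F : Polynomial ℂ, F.degree ≤ ((n - 1) / 2 : ℕ) ∧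
      ∀ x, p.eval x = (2 * x - 1) * F.eval (x * (x - 1)) := by
  set q := p.comp (X + C (2⁻¹:ℂ)) with hqdef
  have heven : ∀ k, (2 ∣ k) → q.coeff k = 0 := by
    intro k hk
    refine shifted_parity p (-1) (fun x => by rw [neg_one_mul]; exact hsym x) k ?_
    rw [(Nat.even_iff.2 (by omega : k % 2 = 0)).neg_one_pow]
    norm_num
  have hq0 : q.coeff 0 = 0 := heven 0 ⟨0, rfl⟩
  have hqX : q = X * q.divX := by
    have := q.X_mul_divX_add
    rw [hq0] at this
    simpa using this.symm
  have hodd : ∀ k, ¬ (2 ∣ k) → (q.divX).coeff k = 0 := by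
    intro k hk
    rw [coeff_divX]
    exact heven (k + 1) (by omega)
  have hqd : q.divX = (contract 2 q.divX).comp (X^2) := eq_expand_of_odd_coeff_zero _ hodd
  set E := contract 2 q.divX with hE
  set F := C (2⁻¹:ℂ) * E.comp (X + C (4⁻¹:ℂ)) with hF
  have hpq : ∀ x : ℂ, p.eval x = q.eval (x - 2⁻¹) := by
    intro x; simp [hqdef, eval_comp]
  have heval : ∀ x : ℂ, p.eval x = (2 * x - 1) * F.eval (x * (x - 1)) := by
    intro x
    rw [hpq x]
    conv_lhs => rw [hqX, hqd]
    simp only [eval_mul, eval_comp, eval_pow, eval_X, eval_add, eval_C, hF]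
    have : (x - 2⁻¹)^2 = x * (x - 1) + 4⁻¹ := by ring
    rw [this]
    ring
  refine ⟨F, ?_, heval⟩
  have hcomp : p = (C 2 * X - 1) * F.comp (X * (X - 1)) := by
    apply Polynomial.funext
    intro x
    rw [heval x]
    simp [eval_comp]
  rcases eq_or_ne F 0 with h0 | h0
  · simp [h0]
  have hg : (X * (X - 1) : Polynomial ℂ).natDegree = 2 := by compute_degree!
  have hlin : (C 2 * X - 1 : Polynomial ℂ).natDegree = 1 := by compute_degree!
  have hlin0 : (C 2 * X - 1 : Polynomial ℂ) ≠ 0 := by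
    intro hc
    have := congrArg (eval 1) hc
    simp at this
    norm_num at this
  have hFc : F.comp (X * (X - 1)) ≠ 0 := by
    intro h
    rcases comp_eq_zero_iff.mp h with h | h
    · exact h0 h
    · rw [h.2] at hg; simp at hg
  have hnat : p.natDegree = 1 + F.natDegree * 2 := by
    rw [hcomp, natDegree_mul hlin0 hFc, hlin, natDegree_comp, hg]
  have hpn : p.natDegree ≤ n := natDegree_le_iff_degree_le.2 hd
  have : F.natDegree ≤ (n - 1) / 2 := by omega
  exact (degree_le_natDegree).trans (by exact_mod_cast Nat.cast_le.2 this)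


/-- Faulhaber-type decomposition: for an Appell sequence satisfying the
reflection relation, `A n = (2x-1) * F_n(x(x-1))` for odd `n` and
`A n = F_n(x(x-1))` for even `n`. -/
theorem appell_faulhaber_decomposition (A : ℕ → Polynomial ℂ)
    (hA : ∀ n, 1 ≤ n → derivative (A n) = (n : ℂ) • A (n - 1))
    (hA0 : (A 0).degree ≤ 0)
    (href : ∀ n x, (A n).eval (1 - x) = (-1) ^ n * (A n).eval x) :
    ∀ n : ℕ,
      (Odd n → ∃ F : Polynomial ℂ, F.degree ≤ ((n - 1) / 2 : ℕ) ∧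
        ∀ x, (A n).eval x = (2 * x - 1) * F.eval (x * (x - 1))) ∧
      (Even n → ∃ F : Polynomial ℂ, F.degree ≤ (n / 2 : ℕ) ∧
        ∀ x, (A n).eval x = F.eval (x * (x - 1))) := by

  have hdeg : ∀ n, (A n).degree ≤ n := by
    intro n
    induction n with
    | zero => simpa using hA0
    | succ n ih =>
        have hder : derivative (A (n+1)) = ((n+1 : ℕ) : ℂ) • A n := by
          simpa using hA (n+1) (by omega)
        by_cases hnd : (A (n+1)).natDegree = 0
        · refine (degree_le_natDegree).trans ?_
          rw [hnd]
          exact_mod_cast Nat.cast_le.2 (Nat.zero_le _)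
        · set m := (A (n+1)).natDegree with hm
          have hA1 : A (n+1) ≠ 0 := fun h => hnd (by rw [hm, h]; simp)
          have hco : (derivative (A (n+1))).coeff (m - 1) ≠ 0 := by
            rw [coeff_derivative]
            have h1 : m - 1 + 1 = m := by omega
            rw [h1]
            have h2 : (A (n+1)).coeff m ≠ 0 := by
              rw [hm]; exact leadingCoeff_ne_zero.2 hA1
            have h3 : ((m - 1 : ℕ) : ℂ) + 1 ≠ 0 := by
              exact_mod_cast (Nat.cast_ne_zero (R := ℂ)).2 (Nat.succ_ne_zero (m - 1))
            exact mul_ne_zero h2 h3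
          have h4 : m - 1 ≤ (derivative (A (n+1))).natDegree :=
            le_natDegree_of_ne_zero hco
          have h5 : (derivative (A (n+1))).natDegree ≤ (A n).natDegree := by
            rw [hder]; exact natDegree_smul_le _ _
          have h6 : (A n).natDegree ≤ n := natDegree_le_iff_degree_le.2 ih
          have h7 : m ≤ n + 1 := by omega
          exact (degree_le_natDegree).trans (by exact_mod_cast Nat.cast_le.2 h7)
  intro n
  constructor
  · intro hn
    refine antisym_decomp (A n) n (hdeg n) ?_
    intro x
    rw [href n x, hn.neg_one_pow, neg_one_mul]
  · intro hn
    refine sym_decomp (A n) n (hdeg n) ?_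
    intro x
    rw [href n x, hn.neg_one_pow, one_mul]
end

section
/- Define Λ_{n,k}(α) = Σ_{ν=0}^k C(n,ν)·(2k-ν)_k·α_{n-ν}, where (m)_k denotes the falling factorial m(m-1)⋯(m-k+1). Then for n - 2 ≥ k ≥ 0 the recurrence n(n-1)·Λ_{n-2,k}(α) = Λ_{n,k+2}(α) - (4k+6)·Λ_{n,k+1}(α) holds. -/
lemma aux_mul (ν j : ℕ) :
    (ν + 2*j) * (ν + 2*j - 1) = ν * (ν - 1) + (4*(ν + j) - 2) * j := by
  rcases ν with _|ν <;> rcases j with _|j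
  · rfl
  · rw [show 0+2*(j+1)-1 = 2*j+1 from by omega, show 4*(0+(j+1))-2 = 4*j+2 from by omega]; ring
  · rw [show (ν+1)+2*0-1 = ν from by omega,
      show 4*((ν+1)+0)-2 = 4*ν+2 from by omega]
    ring
  · rw [show (ν+1)+2*(j+1)-1 = ν+2*j+2 from by omega,
      show 4*((ν+1)+(j+1))-2 = 4*ν+4*j+6 from by omega]
    rw [show (ν+1)-1 = ν from rfl]; ring

lemma key_desc (k ν : ℕ) (h : ν ≤ k + 2) :
    (2*(k+2)-ν).descFactorial (k+2)
      = ν*(ν-1) * ((2*k+2-ν).descFactorial k)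
        + (4*k+6) * ((2*(k+1)-ν).descFactorial (k+1)) := by
  obtain ⟨j, hj⟩ : ∃ j, ν + j = k + 2 := ⟨k+2-ν, by omega⟩
  rw [show 2*(k+2)-ν = (2*k+2-ν) + 1 + 1 from by omega,
     show 2*(k+1)-ν = 2*k+2-ν from by omega]
  set m := 2*k+2-ν with hm
  rw [Nat.succ_descFactorial_succ, Nat.succ_descFactorial_succ, Nat.descFactorial_succ]
  rw [show m - k = j from by omega, show m+1+1 = ν+2*j from by omega,
     show m+1 = ν+2*j-1 from by omega, show 4*k+6 = 4*(ν+j)-2 from by omega]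
  rw [show (ν+2*j) * ((ν+2*j-1) * m.descFactorial k)
      = ((ν+2*j) * (ν+2*j-1)) * m.descFactorial k from by ring, aux_mul]
  ring

lemma choose_aux (m ν : ℕ) :
    (m+2) * ((m+1) * m.choose ν) = (m+2).choose (ν+2) * ((ν+2)*(ν+1)) := by
  have h1 := Nat.add_one_mul_choose_eq m ν
  have h2 := Nat.add_one_mul_choose_eq (m+1) (ν+1)
  calc (m+2) * ((m+1) * m.choose ν) = (m+2) * ((m+1).choose (ν+1) * (ν+1)) := by rw [h1]
    _ = ((m+2) * (m+1).choose (ν+1)) * (ν+1) := by ring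
    _ = ((m+2).choose (ν+2) * (ν+2)) * (ν+1) := by rw [h2]
    _ = _ := by ring

/-- Recurrence for the sums `Λ_{n,k}(α) = Σ_ν C(n,ν)·(2k-ν)_k·α_{n-ν}`. -/
theorem lambda_recurrence (α : ℕ → ℂ)
    (Λ : ℕ → ℕ → ℂ)
    (hΛ : ∀ n k, Λ n k = ∑ ν ∈ Finset.range (k + 1),
      (n.choose ν : ℂ) * ((2 * k - ν).descFactorial k : ℂ) * α (n - ν))
    (n k : ℕ) (hk : k + 2 ≤ n) :
    ((n : ℂ) * (n - 1)) * Λ (n - 2) k = Λ n (k + 2) - (4 * k + 6) * Λ n (k + 1) := by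
  obtain ⟨m, rfl⟩ : ∃ m, n = m + 2 := ⟨n - 2, by omega⟩
  rw [hΛ, hΛ, hΛ]
  simp only [Nat.add_sub_cancel, show k+1+1 = k+2 from rfl, show k+2+1 = k+3 from rfl]
  -- extend the (k+1)-sum to range (k+3)
  have hext : ∑ ν ∈ Finset.range (k + 2),
        ((m+2).choose ν : ℂ) * ((2 * (k+1) - ν).descFactorial (k+1) : ℂ) * α (m+2 - ν)
      = ∑ ν ∈ Finset.range (k + 3),
        ((m+2).choose ν : ℂ) * ((2 * (k+1) - ν).descFactorial (k+1) : ℂ) * α (m+2 - ν) := by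
    conv_rhs => rw [show k + 3 = (k+2) + 1 from rfl, Finset.sum_range_succ]
    rw [show 2*(k+1)-(k+2) = k from by omega,
      Nat.descFactorial_eq_zero_iff_lt.2 (Nat.lt_succ_self k)]
    push_cast
    ring
  rw [hext, Finset.mul_sum]
  conv_rhs => rw [Finset.mul_sum]
  rw [← Finset.sum_sub_distrib]
  -- RHS per-term rewrite using key_desc
  have hRHS : ∀ ν ∈ Finset.range (k + 3),
      ((m+2).choose ν : ℂ) * ((2 * (k+2) - ν).descFactorial (k+2) : ℂ) * α (m+2 - ν)
        - (4 * (k:ℂ) + 6) * (((m+2).choose ν : ℂ) * ((2 * (k+1) - ν).descFactorial (k+1) : ℂ) * α (m+2 - ν))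
      = (((m+2).choose ν * (ν * (ν-1)) * ((2*k+2-ν).descFactorial k) : ℕ) : ℂ) * α (m+2 - ν) := by
    intro ν hν
    rw [Finset.mem_range] at hν
    have hkey := key_desc k ν (by omega)
    have hc : ((2 * (k+2) - ν).descFactorial (k+2) : ℂ)
        = ((ν * (ν-1) * ((2*k+2-ν).descFactorial k) : ℕ) : ℂ)
          + (4 * (k:ℂ) + 6) * (((2*(k+1)-ν).descFactorial (k+1) : ℕ) : ℂ) := by
      rw [hkey]; push_cast; ring
    rw [hc]
    push_cast
    ring
  rw [Finset.sum_congr rfl hRHS]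
  -- now reindex the target sum: peel first two (zero) terms
  conv_rhs => rw [show k + 3 = (k+1) + 1 + 1 from rfl, Finset.sum_range_succ', Finset.sum_range_succ']
  have h01 : (((m+2).choose (0+1) * ((0+1) * ((0+1)-1)) * ((2*k+2-(0+1)).descFactorial k) : ℕ) : ℂ) * α (m+2-(0+1)) = 0 := by
    norm_num
  have h00 : (((m+2).choose 0 * (0 * (0-1)) * ((2*k+2-0).descFactorial k) : ℕ) : ℂ) * α (m+2-0) = 0 := by
    norm_num
  rw [h01, h00, add_zero, add_zero]
  apply Finset.sum_congr rfl
  intro ν hν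
  rw [Finset.mem_range] at hν
  have hc := choose_aux m ν
  have hd : 2*k+2-(ν+1+1) = 2*k-ν := by omega
  have ha : m + 2 - (ν+1+1) = m - ν := by omega
  rw [hd, ha, show ν+1+1 = ν+2 from rfl, show (ν+2)*((ν+2)-1) = (ν+2)*(ν+1) from rfl,
    show (m+2).choose (ν+2) * ((ν+2)*(ν+1)) * ((2*k-ν).descFactorial k)
      = ((m+2) * ((m+1) * m.choose ν)) * ((2*k-ν).descFactorial k) from by rw [hc]]
  push_cast
  ring
end

section
/- Let (A_n) be an Appell sequence with α_n = A_n(0) satisfying the reflection relation A_n(1-x) = (-1)^n·A_n(x). Then for every odd n ≥ 1 and every k with (n+1)/2 ≤ k ≤ n, the identity Σ_{ν=0}^k C(2k-ν, k)·C(n,ν)·α_{n-ν} = 0 holds. -/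
/-!
For odd `n` the polynomial `p = ∑ C(n,ν) α_{n-ν} X^ν` satisfies `p(1 - X) = -p`. The sum in question is
`Λ_k(p) = [t^k] p(t) / (1 - t)^(k+1)`, a linear functional that is invariant under `p ↦ p(1 - X)` on
polynomials of degree at most `2k`, because on both `t^μ` and `(1 - t)^μ` it takes the value
`C(2k - μ, k)`. As `deg p ≤ n ≤ 2k`, this gives `Λ_k(p) = -Λ_k(p)`, so `Λ_k(p) = 0`.
-/

open Finset Polynomial

namespace PowerSeries

variable {R : Type*} [CommRing R]

theorem coeff_X_pow_mul_invOneSubPow {k μ : ℕ} (hμ : μ ≤ 2 * k) :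
    coeff k (X ^ μ * (invOneSubPow R (k + 1)).val) = ((2 * k - μ).choose k : R) := by
  rw [coeff_X_pow_mul', invOneSubPow_val_succ_eq_mk_add_choose, coeff_mk]
  split_ifs with h
  · rw [show k + (k - μ) = 2 * k - μ by omega]
  · rw [Nat.choose_eq_zero_of_lt (by omega), Nat.cast_zero]

theorem coeff_one_sub_X_pow_mul_invOneSubPow {k μ : ℕ} (hμ : μ ≤ 2 * k) :
    coeff k ((1 - X) ^ μ * (invOneSubPow R (k + 1)).val) = ((2 * k - μ).choose k : R) := by
  rcases le_or_gt μ k with h | h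
  · obtain ⟨d, rfl⟩ : ∃ d, k = d + μ := ⟨k - μ, by omega⟩
    rw [add_right_comm, one_sub_pow_mul_invOneSubPow_val_add_eq_invOneSubPow_val,
      invOneSubPow_val_succ_eq_mk_add_choose, coeff_mk, Nat.choose_symm_add,
      show d + (d + μ) = 2 * (d + μ) - μ by omega]
  · obtain ⟨d, rfl⟩ : ∃ d, μ = d + (k + 1) := ⟨μ - (k + 1), by omega⟩
    have hdeg : ((1 - Polynomial.X : R[X]) ^ d).natDegree ≤ d := by compute_degree
    rw [one_sub_pow_add_mul_invOneSubPow_val_eq_one_sub_pow, Nat.choose_eq_zero_of_lt (by omega),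
      Nat.cast_zero, show (1 - X : R⟦X⟧) ^ d = ((1 - Polynomial.X) ^ d : R[X]) by simp,
      Polynomial.coeff_coe, coeff_eq_zero_of_natDegree_lt (by omega)]

end PowerSeries

namespace Polynomial

variable {R : Type*} [CommRing R]

noncomputable def coeffDivOneSubPow (k : ℕ) : R[X] →ₗ[R] R :=
  PowerSeries.coeff k ∘ₗ LinearMap.mulRight R (PowerSeries.invOneSubPow R (k + 1)).val ∘ₗ
    (coeToPowerSeries.algHom R).toLinearMap

theorem coeffDivOneSubPow_apply (k : ℕ) (p : R[X]) :
    coeffDivOneSubPow k p =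
      PowerSeries.coeff k ((p : PowerSeries R) * (PowerSeries.invOneSubPow R (k + 1)).val) := by
  simp [coeffDivOneSubPow]

theorem coeffDivOneSubPow_eq_sum (k : ℕ) (p : R[X]) :
    coeffDivOneSubPow k p = ∑ ν ∈ range (k + 1), ((2 * k - ν).choose k : R) * p.coeff ν := by
  rw [coeffDivOneSubPow_apply, PowerSeries.coeff_mul,
    Nat.sum_antidiagonal_eq_sum_range_succ_mk]
  refine sum_congr rfl fun ν hν => ?_
  rw [coeff_coe, PowerSeries.invOneSubPow_val_succ_eq_mk_add_choose, PowerSeries.coeff_mk,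
    show k + (k - ν) = 2 * k - ν by simp at hν; omega, mul_comm]

theorem coeffDivOneSubPow_comp_one_sub_X {k : ℕ} {p : R[X]} (hp : p.natDegree ≤ 2 * k) :
    coeffDivOneSubPow k (p.comp (1 - X)) = coeffDivOneSubPow k p := by
  conv_lhs => rw [p.as_sum_range_C_mul_X_pow' (Nat.lt_succ_of_le hp)]
  conv_rhs => rw [p.as_sum_range_C_mul_X_pow' (Nat.lt_succ_of_le hp)]
  simp only [sum_comp, mul_comp, C_comp, X_pow_comp]
  simp only [← smul_eq_C_mul, map_sum, map_smul, coeffDivOneSubPow_apply]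
  refine sum_congr rfl fun μ hμ => ?_
  have hμ : μ ≤ 2 * k := Nat.lt_succ_iff.mp (mem_range.mp hμ)
  push_cast
  rw [PowerSeries.coeff_one_sub_X_pow_mul_invOneSubPow hμ,
    PowerSeries.coeff_X_pow_mul_invOneSubPow hμ]

theorem coeffDivOneSubPow_eq_zero_of_comp_one_sub_X_eq_neg [NoZeroDivisors R] [CharZero R]
    {k : ℕ} {p : R[X]} (hp : p.natDegree ≤ 2 * k) (hrefl : p.comp (1 - X) = -p) :
    coeffDivOneSubPow k p = 0 := by
  have := coeffDivOneSubPow_comp_one_sub_X hp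
  rwa [hrefl, map_neg, eq_comm, CharZero.eq_neg_self_iff] at this

noncomputable def appellPoly (α : ℕ → R) (n : ℕ) : R[X] :=
  ∑ ν ∈ range (n + 1), C ((n.choose ν : R) * α (n - ν)) * X ^ ν

theorem eval_appellPoly (α : ℕ → R) (n : ℕ) (x : R) :
    (appellPoly α n).eval x = ∑ ν ∈ range (n + 1), (n.choose ν : R) * α (n - ν) * x ^ ν := by
  simp [appellPoly, eval_finsetSum]

theorem coeff_appellPoly (α : ℕ → R) (n ν : ℕ) :
    (appellPoly α n).coeff ν = (n.choose ν : R) * α (n - ν) := by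
  simp only [appellPoly, finsetSum_coeff, coeff_C_mul_X_pow, sum_ite_eq, mem_range]
  split_ifs with h
  · rfl
  · rw [Nat.choose_eq_zero_of_lt (by omega), Nat.cast_zero, zero_mul]

theorem natDegree_appellPoly_le (α : ℕ → R) (n : ℕ) : (appellPoly α n).natDegree ≤ n :=
  natDegree_sum_le_of_forall_le _ _ fun ν hν =>
    (natDegree_C_mul_X_pow_le _ ν).trans (Nat.lt_succ_iff.mp (mem_range.mp hν))

end Polynomial

theorem appell_vanishing_sum_general (α : ℕ → ℂ) (A : ℕ → ℂ → ℂ)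
    (hA : ∀ n x, A n x =
      ∑ ν ∈ Finset.range (n + 1), (n.choose ν : ℂ) * α (n - ν) * x ^ ν)
    (href : ∀ n x, A n (1 - x) = (-1) ^ n * A n x)
    (n k : ℕ) (hn : Odd n) (hk1 : (n + 1) / 2 ≤ k) :
    ∑ ν ∈ Finset.range (k + 1),
      ((2 * k - ν).choose k : ℂ) * (n.choose ν : ℂ) * α (n - ν) = 0 := by
  have hrefl : (appellPoly α n).comp (1 - X) = -appellPoly α n := by
    refine Polynomial.funext fun x => ?_
    simp only [eval_comp, eval_neg, eval_sub, eval_one, eval_X, eval_appellPoly, ← hA, href,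
      hn.neg_one_pow, neg_one_mul]
  have hvanish := coeffDivOneSubPow_eq_zero_of_comp_one_sub_X_eq_neg
    ((natDegree_appellPoly_le α n).trans (by omega : n ≤ 2 * k)) hrefl
  simpa only [coeffDivOneSubPow_eq_sum, coeff_appellPoly, mul_assoc] using hvanish

/-- Vanishing sums for Appell coefficients under the reflection relation. -/
theorem appell_vanishing_sum (α : ℕ → ℂ) (A : ℕ → ℂ → ℂ)
    (hA : ∀ n x, A n x =
      ∑ ν ∈ Finset.range (n + 1), (n.choose ν : ℂ) * α (n - ν) * x ^ ν)
    (href : ∀ n x, A n (1 - x) = (-1) ^ n * A n x)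
    (n k : ℕ) (hn : Odd n) (hk1 : (n + 1) / 2 ≤ k) (hk2 : k ≤ n) :
    ∑ ν ∈ Finset.range (k + 1),
      ((2 * k - ν).choose k : ℂ) * (n.choose ν : ℂ) * α (n - ν) = 0 :=
  appell_vanishing_sum_general α A hA href n k hn hk1
end

section
/- For every odd n ≥ 1 and every k with (n+1)/2 ≤ k ≤ n, one has Σ_{ν=0}^k C(2k-ν, k)·C(n,ν)·G_{n+1-ν}/(n+1-ν) = 0, where G_m = 2(1-2^m)·B_m are the Genocchi numbers and B_m the Bernoulli numbers. -/
/-!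
Write `a m = G_{m+1}/(m+1) = E_m(0)`, so that `e ν = C(n,ν) a (n-ν)` are the coefficients of the
Euler polynomial `E_n(x)`. The generating-function identity `B(2x)(eˣ + 1) = 2 B(x)` for the
Bernoulli numbers gives `E_m(1) + E_m(0) = 2·0^m`, and since `a m = 0` for even `m > 0` this is
`E_m(1) = (-1)^m E_m(0)`. Taylor expansion at `1` then yields `E_n(1 - x) = -E_n(x)` for odd `n`.
On the other hand the linear form `p ↦ ∑ⱼ C(2k-j,k) pⱼ` is invariant under `p(x) ↦ p(1 - x)` on
polynomials of degree `< 2k`, by the binomial identity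
`∑ⱼ (-1)ʲ C(ν,j) (1+X)^(2k-j) = Xᵛ (1+X)^(2k-ν)`. Hence it vanishes on `E_n`, of degree `n < 2k`.
-/

open Finset
open scoped Nat

open PowerSeries in
theorem rescale_two_bernoulliPowerSeries_mul_exp_add_one :
    rescale (2 : ℚ) (bernoulliPowerSeries ℚ) * (exp ℚ + 1) = 2 * bernoulliPowerSeries ℚ := by
  have hexp : exp ℚ - 1 ≠ 0 := fun h => by simpa [coeff_exp] using congrArg (coeff 1) h
  have hexp_two : rescale (2 : ℚ) (exp ℚ - 1) = (exp ℚ - 1) * (exp ℚ + 1) := by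
    rw [map_sub, map_one, show (2 : ℚ) = (2 : ℕ) by norm_num, ← exp_pow_eq_rescale_exp]
    ring
  have hX : rescale (2 : ℚ) X = 2 * X := by
    ext n
    rw [coeff_rescale, ← map_ofNat C, coeff_C_mul, coeff_X]
    split_ifs <;> simp_all
  apply mul_right_cancel₀ hexp
  calc rescale 2 (bernoulliPowerSeries ℚ) * (exp ℚ + 1) * (exp ℚ - 1)
      = rescale 2 (bernoulliPowerSeries ℚ * (exp ℚ - 1)) := by rw [map_mul, hexp_two]; ring
    _ = 2 * bernoulliPowerSeries ℚ * (exp ℚ - 1) := by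
      rw [bernoulliPowerSeries_mul_exp_sub_one, hX, mul_assoc, bernoulliPowerSeries_mul_exp_sub_one]

open PowerSeries in
theorem sum_range_choose_mul_two_pow_mul_bernoulli (m : ℕ) :
    ∑ t ∈ range (m + 1), (m.choose t : ℚ) * 2 ^ t * bernoulli t = (2 - 2 ^ m) * bernoulli m := by
  have hcoeff := congrArg (coeff m) rescale_two_bernoulliPowerSeries_mul_exp_add_one
  rw [mul_add, mul_one, map_add, coeff_mul, Finset.Nat.sum_antidiagonal_eq_sum_range_succ_mk,
    ← map_ofNat C 2, coeff_C_mul] at hcoeff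
  simp only [bernoulliPowerSeries, coeff_exp, coeff_rescale, coeff_mk,
    Algebra.algebraMap_self_apply] at hcoeff
  have hterm : ∀ t ∈ range (m + 1), (m.choose t : ℚ) * 2 ^ t * bernoulli t =
      m ! * (2 ^ t * (bernoulli t / t !) * (1 / (m - t)!)) := fun t ht => by
    rw [Nat.cast_choose ℚ (by grind)]
    field_simp
  rw [sum_congr rfl hterm, ← mul_sum, eq_sub_of_add_eq hcoeff]
  field_simp

-- `eulerZero m = E_m(0)`, and `eulerCoeff n ν` is the coefficient of `xᵛ` in the Euler polynomial
-- `E_n(x) = ∑ ν, C(n,ν) E_{n-ν}(0) xᵛ`.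
noncomputable def eulerZero (m : ℕ) : ℚ := 2 * (1 - 2 ^ (m + 1)) * bernoulli (m + 1) / (m + 1)

noncomputable def eulerCoeff (n ν : ℕ) : ℚ := n.choose ν * eulerZero (n - ν)

theorem eulerZero_zero : eulerZero 0 = 1 := by norm_num [eulerZero]

theorem eulerZero_of_even {m : ℕ} (hm : Even m) (h0 : m ≠ 0) : eulerZero m = 0 := by
  rw [eulerZero, bernoulli_eq_bernoulli'_of_ne_one (by omega),
    bernoulli'_eq_zero_of_odd hm.add_one (by omega)]
  simp

theorem eulerZero_sub {n ν : ℕ} (h : ν ≤ n) :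
    eulerZero (n - ν) = 2 * (1 - 2 ^ (n + 1 - ν)) * bernoulli (n + 1 - ν) / ((n : ℚ) + 1 - ν) := by
  rw [eulerZero, Nat.cast_sub h, show n - ν + 1 = n + 1 - ν by omega]
  ring

theorem sum_range_choose_mul_eulerZero (m : ℕ) :
    ∑ i ∈ range (m + 1), (m.choose i : ℚ) * eulerZero i =
      (if m = 0 then 2 else 0) - eulerZero m := by
  have hterm : ∀ i ∈ range (m + 1), (m.choose i : ℚ) * eulerZero i =
      2 / (m + 1) * ((m + 1).choose (i + 1) * (1 - 2 ^ (i + 1)) * bernoulli (i + 1)) := by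
    intro i _
    have hchoose : ((m : ℚ) + 1) * m.choose i = (m + 1).choose (i + 1) * ((i : ℚ) + 1) := by
      exact_mod_cast Nat.add_one_mul_choose_eq m i
    rw [eulerZero]
    field_simp
    linear_combination ((1 - 2 ^ (i + 1)) * bernoulli (i + 1)) * hchoose
  have hshift :
      ∑ i ∈ range (m + 1), ((m + 1).choose (i + 1) * (1 - 2 ^ (i + 1)) * bernoulli (i + 1)) =
      (∑ t ∈ range (m + 2), ((m + 1).choose t : ℚ) * bernoulli t)
        - ∑ t ∈ range (m + 2), ((m + 1).choose t : ℚ) * 2 ^ t * bernoulli t := by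
    rw [← sum_sub_distrib, sum_range_succ' _ (m + 1)]
    simp only [mul_sub, mul_one, Nat.choose_zero_right, pow_zero, sub_self, add_zero]
    refine sum_congr rfl fun _ _ => by ring
  have hbernoulli : ∑ t ∈ range (m + 2), ((m + 1).choose t : ℚ) * bernoulli t =
      (if m = 0 then 1 else 0) + bernoulli (m + 1) := by
    rw [sum_range_succ, sum_bernoulli, Nat.choose_self, Nat.cast_one, one_mul]
    simp
  rw [sum_congr rfl hterm, ← mul_sum, hshift, hbernoulli,
    sum_range_choose_mul_two_pow_mul_bernoulli, eulerZero]
  split_ifs with h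
  · subst h; norm_num
  · field_simp; ring

theorem sum_range_choose_mul_eulerZero_sub (m : ℕ) :
    ∑ i ∈ range (m + 1), (m.choose i : ℚ) * eulerZero (m - i) = (-1) ^ m * eulerZero m := by
  have hreflect : ∑ i ∈ range (m + 1), (m.choose i : ℚ) * eulerZero (m - i) =
      ∑ i ∈ range (m + 1), (m.choose i : ℚ) * eulerZero i := by
    rw [← sum_range_reflect]
    refine sum_congr rfl fun i hi => ?_
    rw [show m + 1 - 1 - i = m - i by omega, Nat.choose_symm (by grind),
      Nat.sub_sub_self (by grind)]
  rw [hreflect, sum_range_choose_mul_eulerZero]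
  rcases m.even_or_odd with hm | hm
  · rcases eq_or_ne m 0 with rfl | h0
    · norm_num [eulerZero_zero]
    · simp [h0, eulerZero_of_even hm h0]
  · simp [hm.neg_one_pow, hm.pos.ne']

theorem sum_range_choose_mul_eulerCoeff {n j : ℕ} (hj : j ≤ n) :
    ∑ ν ∈ range (n + 1), (ν.choose j : ℚ) * eulerCoeff n ν = (-1) ^ (n - j) * eulerCoeff n j := by
  have hrestrict : ∑ ν ∈ range (n + 1), (ν.choose j : ℚ) * eulerCoeff n ν =
      ∑ i ∈ range (n - j + 1), ((j + i).choose j : ℚ) * eulerCoeff n (j + i) := by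
    rw [show n + 1 = j + (n - j + 1) by omega, sum_range_add, add_eq_right]
    exact sum_eq_zero fun ν hν => by
      rw [Nat.choose_eq_zero_of_lt (by grind), Nat.cast_zero, zero_mul]
  have hterm : ∀ i ∈ range (n - j + 1), ((j + i).choose j : ℚ) * eulerCoeff n (j + i) =
      n.choose j * ((n - j).choose i * eulerZero (n - j - i)) := by
    intro i hi
    have hchoose : (n.choose (j + i) : ℚ) * (j + i).choose j = n.choose j * (n - j).choose i := by
      exact_mod_cast (by simpa using Nat.choose_mul (n := n) (k := j + i) (s := j) (by omega))
    rw [eulerCoeff, show n - (j + i) = n - j - i by omega]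
    linear_combination eulerZero (n - j - i) * hchoose
  rw [hrestrict, sum_congr rfl hterm, ← mul_sum, sum_range_choose_mul_eulerZero_sub, eulerCoeff]
  ring

open Polynomial in
theorem sum_range_neg_one_pow_mul_choose_mul_choose_sub {R : Type*} [CommRing R] {m μ : ℕ}
    (k : ℕ) (hμ : μ ≤ m) :
    ∑ j ∈ range (μ + 1), (-1 : R) ^ j * μ.choose j * (m - j).choose k =
      if μ ≤ k then ((m - μ).choose (k - μ) : R) else 0 := by
  have hpoly : ∑ j ∈ range (μ + 1), C ((-1 : R) ^ j * μ.choose j) * (X + 1) ^ (m - j) =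
      X ^ μ * (X + 1) ^ (m - μ) :=
    calc ∑ j ∈ range (μ + 1), C ((-1 : R) ^ j * μ.choose j) * (X + 1) ^ (m - j)
        = (∑ j ∈ range (μ + 1), (-1) ^ j * (X + 1) ^ (μ - j) * μ.choose j) * (X + 1) ^ (m - μ) := by
          rw [sum_mul]
          refine sum_congr rfl fun j hj => ?_
          rw [show m - j = (μ - j) + (m - μ) by grind, pow_add]
          simp only [map_mul, map_pow, map_neg, map_one, map_natCast]
          ring
      _ = X ^ μ * (X + 1) ^ (m - μ) := by rw [← add_pow]; ring
  simpa only [finsetSum_coeff, coeff_C_mul, coeff_X_add_one_pow, coeff_X_pow_mul', apply_ite]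
    using congrArg (coeff · k) hpoly

theorem sum_range_neg_one_pow_mul_choose_mul_choose_two_mul_sub {R : Type*} [CommRing R]
    {k N ν : ℕ} (hνN : ν ≤ N) (hνk : ν ≤ 2 * k) :
    ∑ j ∈ range (N + 1), (-1 : R) ^ j * ν.choose j * (2 * k - j).choose k =
      (2 * k - ν).choose k := by
  have htail : ∑ j ∈ range (N - ν), (-1 : R) ^ (ν + 1 + j) * ν.choose (ν + 1 + j) *
      (2 * k - (ν + 1 + j)).choose k = 0 :=
    sum_eq_zero fun j _ => by
      rw [Nat.choose_eq_zero_of_lt (by omega), Nat.cast_zero, mul_zero, zero_mul]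
  rw [show N + 1 = ν + 1 + (N - ν) by omega, sum_range_add, htail, add_zero,
    sum_range_neg_one_pow_mul_choose_mul_choose_sub k hνk]
  split_ifs with h
  · rw [Nat.choose_symm_of_eq_add (show 2 * k - ν = k - ν + k by omega)]
  · rw [Nat.choose_eq_zero_of_lt (by omega), Nat.cast_zero]

-- `(-1)^j * ν.choose j` is the matrix of `p(x) ↦ p(1 - x)` in the monomial basis: `c` is an
-- invariant linear form and `e` an anti-invariant polynomial, so their pairing vanishes.
theorem sum_range_mul_eq_zero_of_reflect {R : Type*} [CommRing R] [NoZeroDivisors R] [CharZero R]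
    (N : ℕ) (c e : ℕ → R)
    (hc : ∀ ν ∈ range (N + 1), ∑ j ∈ range (N + 1), (-1) ^ j * ν.choose j * c j = c ν)
    (he : ∀ j ∈ range (N + 1), ∑ ν ∈ range (N + 1), (-1) ^ j * ν.choose j * e ν = -e j) :
    ∑ ν ∈ range (N + 1), c ν * e ν = 0 := by
  refine self_eq_neg.mp ?_
  calc ∑ j ∈ range (N + 1), c j * e j
      = -∑ j ∈ range (N + 1), ∑ ν ∈ range (N + 1), c j * ((-1) ^ j * ν.choose j * e ν) := by
        rw [← sum_neg_distrib]
        refine sum_congr rfl fun j hj => ?_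
        rw [← mul_sum, he j hj, mul_neg, neg_neg]
    _ = -∑ ν ∈ range (N + 1), (∑ j ∈ range (N + 1), (-1) ^ j * ν.choose j * c j) * e ν := by
        rw [sum_comm]
        simp only [sum_mul]
        exact congrArg _ (sum_congr rfl fun ν _ => sum_congr rfl fun j _ => by ring)
    _ = -∑ ν ∈ range (N + 1), c ν * e ν :=
        congrArg _ (sum_congr rfl fun ν hν => by rw [hc ν hν])

/-- Vanishing sums for the Genocchi numbers `G_m = 2(1-2^m)·B_m`. -/
theorem genocchi_vanishing_sum (n k : ℕ) (hn : Odd n)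
    (hk1 : (n + 1) / 2 ≤ k) (hk2 : k ≤ n) :
    ∑ ν ∈ Finset.range (k + 1),
      ((2 * k - ν).choose k : ℚ) * (n.choose ν : ℚ) *
        (2 * (1 - 2 ^ (n + 1 - ν)) * bernoulli (n + 1 - ν) / ((n : ℚ) + 1 - ν)) = 0 := by
  have h2k : n < 2 * k := by obtain ⟨t, rfl⟩ := hn; omega
  have hsummand : ∀ ν ≤ n, ((2 * k - ν).choose k : ℚ) * (n.choose ν : ℚ) *
      (2 * (1 - 2 ^ (n + 1 - ν)) * bernoulli (n + 1 - ν) / ((n : ℚ) + 1 - ν)) =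
      (2 * k - ν).choose k * eulerCoeff n ν := fun ν hν => by
    rw [eulerCoeff, eulerZero_sub hν, mul_assoc]
  have hvanish : ∀ ν ∈ range (n + 1), ν ∉ range (k + 1) →
      ((2 * k - ν).choose k : ℚ) * eulerCoeff n ν = 0 := fun ν _ hν => by
    rw [Nat.choose_eq_zero_of_lt (by grind), Nat.cast_zero, zero_mul]
  rw [sum_congr rfl fun ν hν => hsummand ν (by grind), sum_subset (by grind) hvanish]
  refine sum_range_mul_eq_zero_of_reflect n _ _ (fun ν hν => ?_) (fun j hj => ?_)
  · exact sum_range_neg_one_pow_mul_choose_mul_choose_two_mul_sub (by grind) (by grind)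
  · simp only [mul_assoc, ← mul_sum, sum_range_choose_mul_eulerCoeff (by grind : j ≤ n)]
    rw [← mul_assoc, ← pow_add, Nat.add_sub_cancel' (by grind), hn.neg_one_pow, neg_one_mul]
end

section
/- For every odd n ≥ 1 there is a polynomial F (the Faulhaber polynomial) such that for all integers m ≥ 0, the power sum S_n(m) = Σ_{ν=0}^{m-1} ν^n equals F(m(m-1)/2). -/
open Polynomial

/-
For odd `n`, `S_n(m) = (B_{n+1}(m) - B_{n+1}) / (n + 1)`, and the reflection formula
`B_{n+1}(1 - x) = (-1)^{n+1} B_{n+1}(x)` makes `B_{n+1}` invariant under `x ↦ 1 - x`.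
Any polynomial with this symmetry is, after the shift `x ↦ x + 1/2`, an even polynomial,
hence a polynomial in `(x - 1/2)^2 = 2 · x(x-1)/2 + 1/4`.
-/

namespace Polynomial

theorem exists_expand_two_eq_of_comp_neg_X {R : Type*} [CommRing R] [NoZeroDivisors R]
    [CharZero R] {p : R[X]} (hp : p.comp (-X) = p) : ∃ q : R[X], expand R 2 q = p := by
  refine ⟨contract 2 p, ext fun n => ?_⟩
  rw [coeff_expand two_pos, coeff_contract two_ne_zero]
  split_ifs with h
  · rw [Nat.div_mul_cancel h]
  · have hcoeff := congr_arg (coeff · n) hp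
    simp only [← neg_one_mul (X : R[X]), ← C_1, ← C_neg, comp_C_mul_X_coeff,
      (Nat.not_even_iff_odd.mp (even_iff_two_dvd.not.mpr h)).neg_one_pow, mul_neg_one] at hcoeff
    exact (CharZero.neg_eq_self_iff.mp hcoeff).symm

theorem exists_eval_eq_eval_mul_sub_one_div_two_of_comp_one_sub_X {K : Type*} [Field K]
    [CharZero K] {p : K[X]} (hp : p.comp (1 - X) = p) :
    ∃ q : K[X], ∀ x : K, p.eval x = q.eval (x * (x - 1) / 2) := by
  set r := p.comp (X + C 2⁻¹)
  have hr : r.comp (-X) = r := by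
    have hreflect : (X + C (2⁻¹ : K)).comp (-X) = (1 - X : K[X]).comp (X + C 2⁻¹) := by
      simp only [add_comp, sub_comp, X_comp, C_comp, one_comp]
      rw [← C_1, show (C 1 : K[X]) = C 2⁻¹ + C 2⁻¹ by rw [← C_add]; norm_num]
      ring
    rw [comp_assoc, hreflect, ← comp_assoc, hp]
  obtain ⟨g, hg⟩ := exists_expand_two_eq_of_comp_neg_X hr
  refine ⟨g.comp (C 2 * X + C 4⁻¹), fun x => ?_⟩
  have hshift : p.eval x = r.eval (x - 2⁻¹) := by simp [r]
  rw [hshift, ← hg, expand_eval, eval_comp]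
  simp only [eval_add, eval_mul, eval_C, eval_X]
  ring

end Polynomial

/-- Faulhaber's theorem: for odd `n` the power sum `S_n(m)` is a polynomial in
`m(m-1)/2`. -/
theorem faulhaber_power_sum (n : ℕ) (hn : Odd n) :
    ∃ F : Polynomial ℚ, ∀ m : ℕ,
      ∑ ν ∈ Finset.range m, (ν : ℚ) ^ n = F.eval ((m : ℚ) * ((m : ℚ) - 1) / 2) := by
  have hsymm : (Polynomial.bernoulli (n + 1)).comp (1 - X) = Polynomial.bernoulli (n + 1) := by
    rw [bernoulli_comp_one_sub_X, hn.add_one.neg_one_pow, one_mul]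
  obtain ⟨G, hG⟩ := exists_eval_eq_eval_mul_sub_one_div_two_of_comp_one_sub_X hsymm
  refine ⟨C ((n + 1 : ℚ)⁻¹) * (G - C (_root_.bernoulli (n + 1))), fun m => ?_⟩
  have hsum := sum_range_pow_eq_bernoulli_sub m n
  rw [hG] at hsum
  simp only [eval_mul, eval_sub, eval_C, ← hsum]
  field_simp
end
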